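/- In any {0,1}-matrix with no rectangle of ones and at most n+1 ones in each row and column, consider a row k under construction whose entries are determined left to right by the greedy rule. If the row currently contains n ones (one short of completion), then the number of galf cells (k,i) is at most n^3. -/
import Mathlib

lemma aux_fin (p : ℕ → Bool) (c : ℕ)
    (h : ∀ m, ((Finset.Icc 1 m).filter (fun l => p l = true)).card ≤ c) :
    {l | 1 ≤ l ∧ p l = true}.Finite := by
  by_contra hS
  have hS' : {l | 1 ≤ l ∧ p l = true}.Infinite := hS
  obtain ⟨T, hTsub, hTcard⟩ := hS'.exists_subset_card_eq (c + 1)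
  have : T ⊆ (Finset.Icc 1 (T.sup id)).filter (fun l => p l = true) := by
    intro l hl
    have hl' := hTsub hl
    simp only [Set.mem_setOf_eq] at hl'
    simp only [Finset.mem_filter, Finset.mem_Icc]
    exact ⟨⟨hl'.1, Finset.le_sup (f := id) hl⟩, hl'.2⟩
  have := (Finset.card_le_card this).trans (h _)
  omega

lemma aux_card (p : ℕ → Bool) (c : ℕ)
    (h : ∀ m, ((Finset.Icc 1 m).filter (fun l => p l = true)).card ≤ c)
    (hf : {l | 1 ≤ l ∧ p l = true}.Finite) : hf.toFinset.card ≤ c := by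
  have : hf.toFinset ⊆ (Finset.Icc 1 (hf.toFinset.sup id)).filter (fun l => p l = true) := by
    intro l hl
    have hl' : 1 ≤ l ∧ p l = true := by simpa using (Set.Finite.mem_toFinset hf).mp hl
    simp only [Finset.mem_filter, Finset.mem_Icc]
    exact ⟨⟨hl'.1, Finset.le_sup (f := id) hl⟩, hl'.2⟩
  exact (Finset.card_le_card this).trans (h _)

theorem stmt14 (n : ℕ) (a : ℕ → ℕ → Bool) (k r : ℕ) (hk : 1 ≤ k) (hr : 1 ≤ r)
    (hnorect : ¬ ∃ i j i' j', 1 ≤ i ∧ 1 ≤ j ∧ 1 ≤ i' ∧ 1 ≤ j' ∧ i ≠ i' ∧ j ≠ j' ∧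
      a i j = true ∧ a i j' = true ∧ a i' j = true ∧ a i' j' = true)
    (hrow : ∀ i m, ((Finset.Icc 1 m).filter (fun j => a i j = true)).card ≤ n + 1)
    (hcol : ∀ j m, ((Finset.Icc 1 m).filter (fun i => a i j = true)).card ≤ n + 1)
    (hbelow : ∀ i j, k < i → a i j = false)
    (hrowk : ∀ j, r ≤ j → a k j = false)
    (hn : ((Finset.Ico 1 r).filter (fun j => a k j = true)).card = n) :
    {l : ℕ | 1 ≤ l ∧ ∃ i j, 1 ≤ i ∧ 1 ≤ j ∧ i ≠ k ∧ j ≠ l ∧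
      a i j = true ∧ a i l = true ∧ a k j = true}.Finite ∧
    {l : ℕ | 1 ≤ l ∧ ∃ i j, 1 ≤ i ∧ 1 ≤ j ∧ i ≠ k ∧ j ≠ l ∧
      a i j = true ∧ a i l = true ∧ a k j = true}.ncard ≤ n ^ 3 := by
  -- finite row and column sets
  have hrfin : ∀ i, {l | 1 ≤ l ∧ a i l = true}.Finite :=
    fun i => aux_fin (fun l => a i l) (n + 1) (hrow i)
  have hcfin : ∀ j, {i | 1 ≤ i ∧ a i j = true}.Finite :=
    fun j => aux_fin (fun i => a i j) (n + 1) (hcol j)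
  set J : Finset ℕ := (Finset.Ico 1 r).filter (fun j => a k j = true) with hJ
  set colF : ℕ → Finset ℕ := fun j => ((hcfin j).toFinset).erase k with hcolF
  set rowF : ℕ → ℕ → Finset ℕ := fun i j => ((hrfin i).toFinset).erase j with hrowF
  set T : Finset ℕ := J.biUnion (fun j => (colF j).biUnion (fun i => rowF i j)) with hT
  -- the galf set is contained in T
  have hsub : {l : ℕ | 1 ≤ l ∧ ∃ i j, 1 ≤ i ∧ 1 ≤ j ∧ i ≠ k ∧ j ≠ l ∧
      a i j = true ∧ a i l = true ∧ a k j = true} ⊆ ↑T := by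
    rintro l ⟨hl, i, j, hi, hj, hik, hjl, haij, hail, hakj⟩
    have hjr : j < r := by
      by_contra hjr
      have := hrowk j (le_of_not_gt hjr)
      rw [this] at hakj; exact Bool.false_ne_true hakj
    have hjJ : j ∈ J := by
      simp only [hJ, Finset.mem_filter, Finset.mem_Ico]
      exact ⟨⟨hj, hjr⟩, hakj⟩
    have hicol : i ∈ colF j := by
      simp only [hcolF, Finset.mem_erase, Set.Finite.mem_toFinset, Set.mem_setOf_eq]
      exact ⟨hik, hi, haij⟩
    have hlrow : l ∈ rowF i j := by
      simp only [hrowF, Finset.mem_erase, Set.Finite.mem_toFinset, Set.mem_setOf_eq]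
      exact ⟨fun h => hjl h.symm, hl, hail⟩
    simp only [Finset.mem_coe, hT, Finset.mem_biUnion]
    exact ⟨j, hjJ, i, hicol, hlrow⟩
  have hfin : {l : ℕ | 1 ≤ l ∧ ∃ i j, 1 ≤ i ∧ 1 ≤ j ∧ i ≠ k ∧ j ≠ l ∧
      a i j = true ∧ a i l = true ∧ a k j = true}.Finite :=
    Set.Finite.subset (T.finite_toSet) hsub
  refine ⟨hfin, ?_⟩
  have hcard : {l : ℕ | 1 ≤ l ∧ ∃ i j, 1 ≤ i ∧ 1 ≤ j ∧ i ≠ k ∧ j ≠ l ∧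
      a i j = true ∧ a i l = true ∧ a k j = true}.ncard ≤ T.card := by
    have := Set.ncard_le_ncard hsub (T.finite_toSet)
    simpa using this
  refine hcard.trans ?_
  -- per-row bound
  have hrowb : ∀ j ∈ J, ∀ i ∈ colF j, (rowF i j).card ≤ n := by
    intro j hjJ i hij
    have hj1 : 1 ≤ j := by
      simp only [hJ, Finset.mem_filter, Finset.mem_Ico] at hjJ
      exact hjJ.1.1
    have hij' : 1 ≤ i ∧ a i j = true := by
      simpa using (Set.Finite.mem_toFinset _).mp (Finset.mem_of_mem_erase hij)
    have hjmem : j ∈ (hrfin i).toFinset := by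
      simp only [Set.Finite.mem_toFinset, Set.mem_setOf_eq]
      exact ⟨hj1, hij'.2⟩
    have h1 : (rowF i j).card = (hrfin i).toFinset.card - 1 := by
      simp only [hrowF]
      exact Finset.card_erase_of_mem hjmem
    have h2 : (hrfin i).toFinset.card ≤ n + 1 :=
      aux_card (fun l => a i l) (n + 1) (hrow i) (hrfin i)
    omega
  -- per-column bound
  have hcolb : ∀ j ∈ J, (colF j).card ≤ n := by
    intro j hjJ
    have hjJ' : (1 ≤ j ∧ j < r) ∧ a k j = true := by
      simpa [hJ, Finset.mem_Ico] using hjJ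
    have hkmem : k ∈ (hcfin j).toFinset := by
      simp only [Set.Finite.mem_toFinset, Set.mem_setOf_eq]
      exact ⟨hk, hjJ'.2⟩
    have h1 : (colF j).card = (hcfin j).toFinset.card - 1 :=
      Finset.card_erase_of_mem hkmem
    have h2 : (hcfin j).toFinset.card ≤ n + 1 :=
      aux_card (fun i => a i j) (n + 1) (hcol j) (hcfin j)
    omega
  calc T.card ≤ ∑ j ∈ J, ((colF j).biUnion (fun i => rowF i j)).card :=
        Finset.card_biUnion_le
    _ ≤ ∑ j ∈ J, n * n := by
        refine Finset.sum_le_sum fun j hjJ => ?_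
        calc ((colF j).biUnion (fun i => rowF i j)).card
            ≤ ∑ i ∈ colF j, (rowF i j).card := Finset.card_biUnion_le
          _ ≤ ∑ _i ∈ colF j, n := Finset.sum_le_sum (hrowb j hjJ)
          _ = (colF j).card * n := by rw [Finset.sum_const, smul_eq_mul]
          _ ≤ n * n := Nat.mul_le_mul_right n (hcolb j hjJ)
    _ = J.card * (n * n) := by rw [Finset.sum_const, smul_eq_mul]
    _ = n ^ 3 := by rw [hn]; ring
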